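/- arXiv:math/9802013 — 4 statements merged into one kernel-verified Lean document; each statement's English description precedes it below -/
import Mathlib

section
/- Let u₁, u₂, u₃, u₄, u, a, b, c, d be nonzero complex numbers such that u₁, u₂, u₃, u₄ are pairwise distinct and ad − bc ≠ 0. Set pᵢ = (uᵢ, a, b) ∈ ℂ³ for 1 ≤ i ≤ 4 and p₅ = (u, c, d) ∈ ℂ³. Then for every j ∈ {1, 2, 3, 4, 5} there exists a homogeneous polynomial F of degree 3 in ℂ[U, X, Y], all of whose monomials lie in the set {U³, U²X, U²Y, UX², UXY, UY², X³, Y³}, such that F(pᵢ) = 0 for all i ≠ j and F(p_j) ≠ 0. -/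
open MvPolynomial

/-- The allowed cubic monomials `U³, U²X, U²Y, UX², UXY, UY², X³, Y³` in the
variables `U = X 0`, `X = X 1`, `Y = X 2`, given by their exponent vectors. -/
def allowedCubicMonomials : Set (Fin 3 →₀ ℕ) :=
  { Finsupp.single 0 3,
    Finsupp.single 0 2 + Finsupp.single 1 1,
    Finsupp.single 0 2 + Finsupp.single 2 1,
    Finsupp.single 0 1 + Finsupp.single 1 2,
    Finsupp.single 0 1 + Finsupp.single 1 1 + Finsupp.single 2 1,
    Finsupp.single 0 1 + Finsupp.single 2 2,
    Finsupp.single 1 3,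
    Finsupp.single 2 3 }

noncomputable def Fgen (e0 e1 e2 e3 e6 : ℂ) : MvPolynomial (Fin 3) ℂ :=
  monomial (Finsupp.single 0 3) e0
  + monomial (Finsupp.single 0 2 + Finsupp.single 1 1) e1
  + monomial (Finsupp.single 0 2 + Finsupp.single 2 1) e2
  + monomial (Finsupp.single 0 1 + Finsupp.single 1 2) e3
  + monomial (Finsupp.single 1 3) e6

lemma Fgen_hom (e0 e1 e2 e3 e6 : ℂ) : (Fgen e0 e1 e2 e3 e6).IsHomogeneous 3 := by
  unfold Fgen
  repeat' apply IsHomogeneous.add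
  all_goals
    exact isHomogeneous_monomial _ (by
      simp [Finsupp.degree_eq_weight_one, map_add, Finsupp.weight_apply,
        Finsupp.sum_single_index])

set_option maxHeartbeats 1000000 in
lemma Fgen_supp (e0 e1 e2 e3 e6 : ℂ) :
    ((Fgen e0 e1 e2 e3 e6).support : Set (Fin 3 →₀ ℕ)) ⊆ allowedCubicMonomials := by
  intro m hm
  simp only [Finset.mem_coe, Fgen] at hm
  repeat' rcases Finset.mem_union.mp (support_add hm) with hm | hm
  all_goals
    have h := Finset.mem_singleton.mp (support_monomial_subset hm)
    subst h
    simp [allowedCubicMonomials]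

lemma Fgen_eval (e0 e1 e2 e3 e6 : ℂ) (v : Fin 3 → ℂ) :
    eval v (Fgen e0 e1 e2 e3 e6) =
      e0 * v 0 ^ 3 + e1 * (v 0 ^ 2 * v 1) + e2 * (v 0 ^ 2 * v 2)
        + e3 * (v 0 * v 1 ^ 2) + e6 * v 1 ^ 3 := by
  simp [Fgen, eval_monomial, Finsupp.prod_add_index, Finsupp.prod_single_index, pow_add]

/-- Helper: separate one of the four collinear points from the rest. -/
lemma sep_aux (w r s t u a b c d : ℂ) (hu : u ≠ 0) (ha : a ≠ 0)
    (hdet : a * d - b * c ≠ 0) (hwr : w ≠ r) (hws : w ≠ s) (hwt : w ≠ t) :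
    ∃ F : MvPolynomial (Fin 3) ℂ,
      F.IsHomogeneous 3 ∧
      (F.support : Set (Fin 3 →₀ ℕ)) ⊆ allowedCubicMonomials ∧
      eval ![r, a, b] F = 0 ∧ eval ![s, a, b] F = 0 ∧ eval ![t, a, b] F = 0 ∧
      eval ![u, c, d] F = 0 ∧ eval ![w, a, b] F ≠ 0 := by
  set s1 : ℂ := r + s + t with hs1
  set s2 : ℂ := r*s + r*t + s*t with hs2
  set s3 : ℂ := r*s*t with hs3
  set G5 : ℂ := a^3*u^3 - a^2*s1*u^2*c + a*s2*u*c^2 - s3*c^3 with hG5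
  have hden : u^2 * (a*d - b*c) ≠ 0 := mul_ne_zero (pow_ne_zero 2 hu) hdet
  set lam : ℂ := G5 / (u^2 * (a*d - b*c)) with hlam
  have hlameq : lam * (u^2 * (a*d - b*c)) = G5 := div_mul_cancel₀ _ hden
  refine ⟨Fgen (a^3) (-(a^2*s1) + lam*b) (-(lam*a)) (a*s2) (-s3),
    Fgen_hom _ _ _ _ _, Fgen_supp _ _ _ _ _, ?_, ?_, ?_, ?_, ?_⟩
  · simp only [Fgen_eval, Matrix.cons_val_zero, Matrix.cons_val_one, Matrix.head_cons,
      Matrix.cons_val_two, Matrix.tail_cons]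
    ring
  · simp only [Fgen_eval, Matrix.cons_val_zero, Matrix.cons_val_one, Matrix.head_cons,
      Matrix.cons_val_two, Matrix.tail_cons]
    ring
  · simp only [Fgen_eval, Matrix.cons_val_zero, Matrix.cons_val_one, Matrix.head_cons,
      Matrix.cons_val_two, Matrix.tail_cons]
    ring
  · simp only [Fgen_eval, Matrix.cons_val_zero, Matrix.cons_val_one, Matrix.head_cons,
      Matrix.cons_val_two, Matrix.tail_cons]
    have : a^3*u^3 + (-(a^2*s1) + lam*b) * (u^2*c) + (-(lam*a)) * (u^2*d)
        + a*s2*(u*c^2) + (-s3)*c^3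
        = G5 - lam * (u^2 * (a*d - b*c)) := by ring
    rw [this, hlameq]; ring
  · simp only [Fgen_eval, Matrix.cons_val_zero, Matrix.cons_val_one, Matrix.head_cons,
      Matrix.cons_val_two, Matrix.tail_cons]
    have : a^3*w^3 + (-(a^2*s1) + lam*b) * (w^2*a) + (-(lam*a)) * (w^2*b)
        + a*s2*(w*a^2) + (-s3)*a^3
        = a^3 * ((w - r) * ((w - s) * (w - t))) := by ring
    rw [this]
    exact mul_ne_zero (pow_ne_zero 3 ha) (mul_ne_zero (sub_ne_zero.mpr hwr)
      (mul_ne_zero (sub_ne_zero.mpr hws) (sub_ne_zero.mpr hwt)))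


/-- Lemma 3.3: the five points `pᵢ = (uᵢ, a, b)` (1 ≤ i ≤ 4) and `p₅ = (u, c, d)`
can be separated by cubics supported on the allowed monomials. -/
theorem five_points_separated_by_allowed_cubics
    (u₁ u₂ u₃ u₄ u a b c d : ℂ)
    (hu₁ : u₁ ≠ 0) (hu₂ : u₂ ≠ 0) (hu₃ : u₃ ≠ 0) (hu₄ : u₄ ≠ 0) (hu : u ≠ 0)
    (ha : a ≠ 0) (hb : b ≠ 0) (hc : c ≠ 0) (hd : d ≠ 0)
    (h₁₂ : u₁ ≠ u₂) (h₁₃ : u₁ ≠ u₃) (h₁₄ : u₁ ≠ u₄)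
    (h₂₃ : u₂ ≠ u₃) (h₂₄ : u₂ ≠ u₄) (h₃₄ : u₃ ≠ u₄)
    (hdet : a * d - b * c ≠ 0) :
    ∀ j : Fin 5, ∃ F : MvPolynomial (Fin 3) ℂ,
      F.IsHomogeneous 3 ∧
      (F.support : Set (Fin 3 →₀ ℕ)) ⊆ allowedCubicMonomials ∧
      (∀ i : Fin 5, i ≠ j →
        MvPolynomial.eval
          (![![u₁, a, b], ![u₂, a, b], ![u₃, a, b], ![u₄, a, b], ![u, c, d]] i) F = 0) ∧
      MvPolynomial.eval
        (![![u₁, a, b], ![u₂, a, b], ![u₃, a, b], ![u₄, a, b], ![u, c, d]] j) F ≠ 0 := by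
  intro j
  fin_cases j
  · obtain ⟨F, h1, h2, e2, e3, e4, e5, ew⟩ :=
      sep_aux u₁ u₂ u₃ u₄ u a b c d hu ha hdet h₁₂ h₁₃ h₁₄
    refine ⟨F, h1, h2, ?_, by simpa using ew⟩
    intro i hi; fin_cases i <;> simp_all
  · obtain ⟨F, h1, h2, e2, e3, e4, e5, ew⟩ :=
      sep_aux u₂ u₁ u₃ u₄ u a b c d hu ha hdet h₁₂.symm h₂₃ h₂₄
    refine ⟨F, h1, h2, ?_, by simpa using ew⟩
    intro i hi; fin_cases i <;> simp_all
  · obtain ⟨F, h1, h2, e2, e3, e4, e5, ew⟩ :=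
      sep_aux u₃ u₁ u₂ u₄ u a b c d hu ha hdet h₁₃.symm h₂₃.symm h₃₄
    refine ⟨F, h1, h2, ?_, by simpa using ew⟩
    intro i hi; fin_cases i <;> simp_all
  · obtain ⟨F, h1, h2, e2, e3, e4, e5, ew⟩ :=
      sep_aux u₄ u₁ u₂ u₃ u a b c d hu ha hdet h₁₄.symm h₂₄.symm h₃₄.symm
    refine ⟨F, h1, h2, ?_, by simpa using ew⟩
    intro i hi; fin_cases i <;> simp_all
  · refine ⟨Fgen 0 b (-a) 0 0, Fgen_hom _ _ _ _ _, Fgen_supp _ _ _ _ _, ?_, ?_⟩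
    · intro i hi; fin_cases i <;> simp_all [Fgen_eval] <;> ring
    · have h5 : (![![u₁, a, b], ![u₂, a, b], ![u₃, a, b], ![u₄, a, b], ![u, c, d]])
          (⟨4, by omega⟩ : Fin 5) = ![u, c, d] := rfl
      simp only [h5, Fgen_eval, Matrix.cons_val_zero, Matrix.cons_val_one, Matrix.head_cons,
        Matrix.cons_val_two, Matrix.tail_cons]
      have : (0:ℂ)*u^3 + b*(u^2*c) + (-a)*(u^2*d) + 0*(u*c^2) + 0*c^3
          = -(u^2*(a*d - b*c)) := by ring
      rw [this]
      exact neg_ne_zero.mpr (mul_ne_zero (pow_ne_zero 2 hu) hdet)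
end

section
/- Let a, b, c, d, u be nonzero complex numbers with ad − bc ≠ 0, and let u₁, u₂, u₃, u₄ be complex numbers with u₄ ∉ {u₁, u₂, u₃}. Then there exist complex numbers a₁₀, a₀₁, a₂₀, a₁₁, a₀₂, a₃₀, a₀₃ such that the homogeneous cubic F = U³ + a₁₀U²X + a₀₁U²Y + a₂₀UX² + a₁₁UXY + a₀₂UY² + a₃₀X³ + a₀₃Y³ in ℂ[U, X, Y] satisfies F(uᵢ, a, b) = 0 for i = 1, 2, 3, F(u, c, d) = 0, and F(u₄, a, b) ≠ 0. -/
open MvPolynomial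

/-- The core construction in the proof of Lemma 3.3: a cubic which is monic in `U`,
supported on the allowed cubic monomials, vanishing at the three collinear points
`(uᵢ, a, b)`, `i = 1, 2, 3`, and at the off-line point `(u, c, d)`, but not at the
fourth collinear point `(u₄, a, b)`. Here `U = X 0`, `X = X 1`, `Y = X 2`. -/
theorem exists_monic_cubic_through_three_and_off_point
    (a b c d u u₁ u₂ u₃ u₄ : ℂ)
    (ha : a ≠ 0) (hb : b ≠ 0) (hc : c ≠ 0) (hd : d ≠ 0) (hu : u ≠ 0)
    (hdet : a * d - b * c ≠ 0)
    (h₄₁ : u₄ ≠ u₁) (h₄₂ : u₄ ≠ u₂) (h₄₃ : u₄ ≠ u₃) :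
    ∃ a₁₀ a₀₁ a₂₀ a₁₁ a₀₂ a₃₀ a₀₃ : ℂ,
      ∀ F : MvPolynomial (Fin 3) ℂ,
        F = X 0 ^ 3 + C a₁₀ * X 0 ^ 2 * X 1 + C a₀₁ * X 0 ^ 2 * X 2 +
            C a₂₀ * X 0 * X 1 ^ 2 + C a₁₁ * X 0 * X 1 * X 2 + C a₀₂ * X 0 * X 2 ^ 2 +
            C a₃₀ * X 1 ^ 3 + C a₀₃ * X 2 ^ 3 →
        MvPolynomial.eval ![u₁, a, b] F = 0 ∧
        MvPolynomial.eval ![u₂, a, b] F = 0 ∧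
        MvPolynomial.eval ![u₃, a, b] F = 0 ∧
        MvPolynomial.eval ![u, c, d] F = 0 ∧
        MvPolynomial.eval ![u₄, a, b] F ≠ 0 := by
  obtain ⟨E, hE⟩ : ∃ E, E = a * d - b * c := ⟨_, rfl⟩
  have hE0 : E ≠ 0 := hE ▸ hdet
  obtain ⟨p, hp⟩ : ∃ p, p = -(u₁ + u₂ + u₃) := ⟨_, rfl⟩
  obtain ⟨q, hq⟩ : ∃ q, q = u₁ * u₂ + u₁ * u₃ + u₂ * u₃ := ⟨_, rfl⟩
  obtain ⟨r, hr⟩ : ∃ r, r = -(u₁ * u₂ * u₃) := ⟨_, rfl⟩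
  obtain ⟨r', hr'⟩ : ∃ r', r' = r * c ^ 3 / a ^ 3 := ⟨_, rfl⟩
  obtain ⟨q', hq'⟩ : ∃ q', q' = (-(u ^ 3) - r') / u := ⟨_, rfl⟩
  obtain ⟨a₁₀, ha₁₀⟩ : ∃ x, x = p * d / E := ⟨_, rfl⟩
  obtain ⟨a₀₁, ha₀₁⟩ : ∃ x, x = -(p * c) / E := ⟨_, rfl⟩
  obtain ⟨a₂₀, ha₂₀⟩ : ∃ x, x = (q * d ^ 2 + q' * b ^ 2) / E ^ 2 := ⟨_, rfl⟩
  obtain ⟨a₁₁, ha₁₁⟩ : ∃ x, x = (-(2 * q * c * d) - 2 * q' * a * b) / E ^ 2 := ⟨_, rfl⟩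
  obtain ⟨a₀₂, ha₀₂⟩ : ∃ x, x = (q * c ^ 2 + q' * a ^ 2) / E ^ 2 := ⟨_, rfl⟩
  obtain ⟨a₃₀, ha₃₀⟩ : ∃ x, x = r / a ^ 3 := ⟨_, rfl⟩
  -- the scalar identities
  have h11 : a₁₀ * a + a₀₁ * b = p := by
    rw [ha₁₀, ha₀₁]; field_simp; rw [hE]; ring
  have h12 : a₁₀ * c + a₀₁ * d = 0 := by
    rw [ha₁₀, ha₀₁, hE]; field_simp; ring
  have h21 : a₂₀ * a ^ 2 + a₁₁ * (a * b) + a₀₂ * b ^ 2 = q := by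
    rw [ha₂₀, ha₁₁, ha₀₂]; field_simp; rw [hE]; ring
  have h22 : a₂₀ * c ^ 2 + a₁₁ * (c * d) + a₀₂ * d ^ 2 = q' := by
    rw [ha₂₀, ha₁₁, ha₀₂]; field_simp; rw [hE]; ring
  have h31 : a₃₀ * a ^ 3 + 0 * b ^ 3 = r := by
    rw [ha₃₀]; field_simp; ring
  have h32 : a₃₀ * c ^ 3 + 0 * d ^ 3 = r' := by
    rw [ha₃₀, hr']; field_simp; ring
  have hline : u ^ 3 + q' * u + r' = 0 := by
    rw [hq']; field_simp; ring
  refine ⟨a₁₀, a₀₁, a₂₀, a₁₁, a₀₂, a₃₀, 0, ?_⟩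
  intro F hF
  subst hF
  have key : ∀ t : ℂ,
      MvPolynomial.eval ![t, a, b]
        (X 0 ^ 3 + C a₁₀ * X 0 ^ 2 * X 1 + C a₀₁ * X 0 ^ 2 * X 2 +
          C a₂₀ * X 0 * X 1 ^ 2 + C a₁₁ * X 0 * X 1 * X 2 + C a₀₂ * X 0 * X 2 ^ 2 +
          C a₃₀ * X 1 ^ 3 + C (0 : ℂ) * X 2 ^ 3) =
      (t - u₁) * (t - u₂) * (t - u₃) := by
    intro t
    simp only [map_add, map_mul, map_pow, eval_C, eval_X, Matrix.cons_val_zero,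
      Matrix.cons_val_one, Matrix.head_cons, Matrix.cons_val_two, Matrix.tail_cons]
    linear_combination t ^ 2 * h11 + t * h21 + h31 + t ^ 2 * hp + t * hq + hr
  have hcd : MvPolynomial.eval ![u, c, d]
        (X 0 ^ 3 + C a₁₀ * X 0 ^ 2 * X 1 + C a₀₁ * X 0 ^ 2 * X 2 +
          C a₂₀ * X 0 * X 1 ^ 2 + C a₁₁ * X 0 * X 1 * X 2 + C a₀₂ * X 0 * X 2 ^ 2 +
          C a₃₀ * X 1 ^ 3 + C (0 : ℂ) * X 2 ^ 3) = 0 := by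
    simp only [map_add, map_mul, map_pow, eval_C, eval_X, Matrix.cons_val_zero,
      Matrix.cons_val_one, Matrix.head_cons, Matrix.cons_val_two, Matrix.tail_cons]
    linear_combination u ^ 2 * h12 + u * h22 + h32 + hline
  refine ⟨by rw [key]; ring, by rw [key]; ring, by rw [key]; ring, hcd, ?_⟩
  rw [key]
  exact mul_ne_zero (mul_ne_zero (sub_ne_zero.mpr h₄₁) (sub_ne_zero.mpr h₄₂))
    (sub_ne_zero.mpr h₄₃)
end

section
/- Let m ≥ 1 and k ≥ 1 be integers, and let v₁, …, v_k be nonzero vectors in ℂ^{m+1} that are pairwise non-proportional (i.e., vᵢ is not a scalar multiple of v_j for i ≠ j). Then the linear map sending each homogeneous polynomial f of degree k − 1 in m + 1 variables over ℂ to the vector (f(v₁), …, f(v_k)) ∈ ℂ^k is surjective. -/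
open MvPolynomial

noncomputable def linForm (m : ℕ) (φ : Module.Dual ℂ (Fin (m+1) → ℂ)) :
    MvPolynomial (Fin (m+1)) ℂ :=
  ∑ a, C (φ (Pi.single a 1)) * X a

lemma linForm_homog (m : ℕ) (φ : Module.Dual ℂ (Fin (m+1) → ℂ)) :
    (linForm m φ).IsHomogeneous 1 := by
  apply IsHomogeneous.sum
  intro a _
  simpa using (isHomogeneous_C _ (φ (Pi.single a 1))).mul (isHomogeneous_X _ a)

lemma linForm_aeval (m : ℕ) (φ : Module.Dual ℂ (Fin (m+1) → ℂ)) (x : Fin (m+1) → ℂ) :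
    aeval x (linForm m φ) = φ x := by
  have hx : x = ∑ a, x a • (Pi.single a 1 : Fin (m+1) → ℂ) := by
    funext j
    simp [Finset.sum_apply, Pi.single_apply]
  rw [linForm, map_sum]
  conv_rhs => rw [hx]
  simp [map_sum, mul_comm]

/-- The linear map sending a homogeneous polynomial `f` of degree `d` in `m + 1`
variables over `ℂ` to its vector of values `(f(v 0), …, f(v (k-1))) ∈ ℂᵏ`. -/
noncomputable def evalAtPointsMap (m k d : ℕ) (v : Fin k → (Fin (m + 1) → ℂ)) :
    homogeneousSubmodule (Fin (m + 1)) ℂ d →ₗ[ℂ] (Fin k → ℂ) :=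
  (LinearMap.pi fun i => (MvPolynomial.aeval (v i)).toLinearMap).comp
    (homogeneousSubmodule (Fin (m + 1)) ℂ d).subtype

/-- A reduced finite scheme of `k` distinct points in `ℙᵐ` is `(k-1)`-normal:
the evaluation map on degree-`(k-1)` forms is surjective. -/
theorem eval_map_degree_sub_one_surjective
    (m k : ℕ) (hm : 1 ≤ m) (hk : 1 ≤ k) (v : Fin k → (Fin (m + 1) → ℂ))
    (hv : ∀ i, v i ≠ 0)
    (hprop : ∀ i j, i ≠ j → ∀ t : ℂ, v i ≠ t • v j) :
    Function.Surjective (evalAtPointsMap m k (k - 1) v) := by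
  have key : ∀ i : Fin k, ∃ g : homogeneousSubmodule (Fin (m+1)) ℂ (k-1),
      evalAtPointsMap m k (k-1) v g = Pi.single i 1 := by
    intro i
    have hφ : ∀ j : Fin k, j ≠ i → ∃ φ : Module.Dual ℂ (Fin (m+1) → ℂ),
        φ (v i) ≠ 0 ∧ φ (v j) = 0 := by
      intro j hj
      have hx : v i ∉ Submodule.span ℂ {v j} := by
        rw [Submodule.mem_span_singleton]
        rintro ⟨t, ht⟩
        exact hprop i j (fun h => hj h.symm) t ht.symm
      obtain ⟨f, hf1, hf2⟩ :=
        (Submodule.span ℂ {v j}).exists_dual_map_eq_bot_of_notMem hx inferInstance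
      refine ⟨f, hf1, ?_⟩
      have hmem : f (v j) ∈ (Submodule.span ℂ {v j}).map f :=
        Submodule.mem_map_of_mem (Submodule.mem_span_singleton_self _)
      rw [hf2] at hmem
      simpa using hmem
    classical
    set φ : Fin k → Module.Dual ℂ (Fin (m+1) → ℂ) :=
      fun j => if h : j ≠ i then (hφ j h).choose else 0 with hφdef
    have hφi : ∀ j, j ≠ i → (φ j) (v i) ≠ 0 := by
      intro j h; simp only [hφdef, dif_pos h]; exact (hφ j h).choose_spec.1
    have hφj : ∀ j, j ≠ i → (φ j) (v j) = 0 := by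
      intro j h; simp only [hφdef, dif_pos h]; exact (hφ j h).choose_spec.2
    set f : MvPolynomial (Fin (m+1)) ℂ := ∏ j ∈ Finset.univ.erase i, linForm m (φ j) with hfdef
    have hfh : f ∈ homogeneousSubmodule (Fin (m+1)) ℂ (k-1) := by
      rw [mem_homogeneousSubmodule]
      have := IsHomogeneous.prod (Finset.univ.erase i) (fun j => linForm m (φ j))
        (fun _ => 1) (fun j _ => linForm_homog m (φ j))
      simpa [Finset.card_erase_of_mem, Finset.card_univ] using this
    have heval : ∀ l : Fin k, aeval (v l) f = ∏ j ∈ Finset.univ.erase i, (φ j) (v l) := by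
      intro l
      rw [hfdef, map_prod]
      exact Finset.prod_congr rfl fun j _ => linForm_aeval m (φ j) (v l)
    set c : ℂ := ∏ j ∈ Finset.univ.erase i, (φ j) (v i) with hcdef
    have hc : c ≠ 0 :=
      Finset.prod_ne_zero_iff.2 fun j hj => hφi j (Finset.ne_of_mem_erase hj)
    refine ⟨c⁻¹ • ⟨f, hfh⟩, ?_⟩
    funext l
    have : evalAtPointsMap m k (k-1) v (c⁻¹ • ⟨f, hfh⟩) l = c⁻¹ * aeval (v l) f := by
      simp [evalAtPointsMap]
    rw [this, heval]
    rcases eq_or_ne l i with rfl | hl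
    · rw [← hcdef, inv_mul_cancel₀ hc]; simp
    · have hz : ∏ j ∈ Finset.univ.erase i, (φ j) (v l) = 0 :=
        Finset.prod_eq_zero (Finset.mem_erase.2 ⟨hl, Finset.mem_univ l⟩) (hφj l hl)
      rw [hz]
      simp [Pi.single_apply, hl]
  intro y
  choose g hg using key
  refine ⟨∑ i, y i • g i, ?_⟩
  rw [map_sum]
  funext j
  simp only [Finset.sum_apply, map_smul, hg, Pi.smul_apply, Pi.single_apply, smul_eq_mul]
  simp
end

section
/- Let m ≥ 1 and k ≥ 2 be integers, and let v₁, …, v_k be nonzero vectors in ℂ^{m+1} that are pairwise non-proportional. Then the linear map sending each homogeneous polynomial f of degree k − 2 in m + 1 variables over ℂ to the vector (f(v₁), …, f(v_k)) ∈ ℂ^k fails to be surjective if and only if the linear span of {v₁, …, v_k} in ℂ^{m+1} has dimension at most 2 (equivalently, the corresponding k points of ℙ^m all lie on a single line). -/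
open MvPolynomial

namespace EvalPointsAux

open Module

noncomputable def linPoly {n : ℕ} (c : Fin n → ℂ) : MvPolynomial (Fin n) ℂ :=
  ∑ j, C (c j) * X j

lemma linPoly_isHomogeneous {n : ℕ} (c : Fin n → ℂ) : (linPoly c).IsHomogeneous 1 :=
  IsHomogeneous.sum _ _ _ fun _ _ => isHomogeneous_C_mul_X _ _

lemma aeval_linPoly {n : ℕ} (c w : Fin n → ℂ) :
    aeval w (linPoly c) = ∑ j, c j * w j := by
  simp [linPoly]

lemma sum_coeff_mul (n : ℕ) (f : (Fin n → ℂ) →ₗ[ℂ] ℂ) (w : Fin n → ℂ) :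
    ∑ j, f (Pi.single j 1) * w j = f w := by
  conv_rhs => rw [← Finset.univ_sum_single w]
  rw [map_sum]
  refine Finset.sum_congr rfl fun j _ => ?_
  have h1 : Pi.single j (w j) = (w j) • (Pi.single j 1 : Fin n → ℂ) := by
    funext l
    by_cases hl : l = j <;> simp [Pi.single_apply, hl]
  rw [h1, map_smul, smul_eq_mul, mul_comm]

lemma exists_coeffs {n : ℕ} (W : Submodule ℂ (Fin n → ℂ)) (x : Fin n → ℂ) (hx : x ∉ W) :
    ∃ c : Fin n → ℂ, (∑ j, c j * x j) ≠ 0 ∧ ∀ w ∈ W, ∑ j, c j * w j = 0 := by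
  obtain ⟨f, hfx, hfW⟩ := W.exists_dual_map_eq_bot_of_notMem hx inferInstance
  refine ⟨fun j => f (Pi.single j 1), ?_, fun w hw => ?_⟩
  · rw [sum_coeff_mul]; exact hfx
  · rw [sum_coeff_mul]
    have : f w ∈ W.map f := Submodule.mem_map_of_mem hw
    rw [hfW] at this
    simpa using this

lemma exists_good_pair (N k : ℕ) (v : Fin k → (Fin N → ℂ))
    (hprop : ∀ i j, i ≠ j → ∀ t : ℂ, v i ≠ t • v j)
    (h3 : 3 ≤ finrank ℂ ↥(Submodule.span ℂ (Set.range v))) (i : Fin k) :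
    ∃ j1 j2 : Fin k, j1 ≠ j2 ∧ j1 ≠ i ∧ j2 ≠ i ∧
      v i ∉ Submodule.span ℂ ({v j1, v j2} : Set (Fin N → ℂ)) := by
  by_contra hno
  push_neg at hno
  have hk2 : 2 ≤ k := by
    by_contra hk
    have := finrank_range_le_card (R := ℂ) v
    rw [Set.finrank] at this
    simp only [Fintype.card_fin] at this
    omega
  have : Nontrivial (Fin k) := Fin.nontrivial_iff_two_le.mpr hk2
  obtain ⟨j0, hj0⟩ := exists_ne i
  have hle : Submodule.span ℂ (Set.range v) ≤
      Submodule.span ℂ ({v i, v j0} : Set (Fin N → ℂ)) := by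
    rw [Submodule.span_le]
    rintro _ ⟨j, rfl⟩
    by_cases hji : j = i
    · subst hji; exact Submodule.subset_span (by simp)
    by_cases hjj0 : j = j0
    · subst hjj0; exact Submodule.subset_span (by simp)
    have hmem := hno j0 j (fun h => hjj0 h.symm) hj0 hji
    rw [Submodule.mem_span_pair] at hmem
    obtain ⟨a, b, hab⟩ := hmem
    have hb : b ≠ 0 := by
      intro hb0
      subst hb0
      rw [zero_smul, add_zero] at hab
      exact hprop i j0 (fun h => hj0 h.symm) a hab.symm
    have hvj : v j = b⁻¹ • (v i - a • v j0) := by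
      rw [← hab, add_sub_cancel_left, smul_smul, inv_mul_cancel₀ hb, one_smul]
    rw [hvj]
    exact Submodule.smul_mem _ _ (Submodule.sub_mem _
      (Submodule.subset_span (by simp))
      (Submodule.smul_mem _ _ (Submodule.subset_span (by simp))))
  have h2 : finrank ℂ ↥(Submodule.span ℂ ({v i, v j0} : Set (Fin N → ℂ))) ≤ 2 := by
    have he : ({v i, v j0} : Set (Fin N → ℂ)) = Set.range ![v i, v j0] := by
      rw [Matrix.range_cons_cons_empty]
    rw [he]
    have := finrank_range_le_card (R := ℂ) ![v i, v j0]
    rw [Set.finrank] at this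
    simpa using this
  have := Submodule.finrank_mono hle
  omega

lemma exists_sep_poly (N k : ℕ) (hk3 : 3 ≤ k) (v : Fin k → (Fin N → ℂ))
    (hprop : ∀ i j, i ≠ j → ∀ t : ℂ, v i ≠ t • v j)
    (h3 : 3 ≤ finrank ℂ ↥(Submodule.span ℂ (Set.range v))) (i : Fin k) :
    ∃ f : MvPolynomial (Fin N) ℂ, f.IsHomogeneous (k - 2) ∧
      aeval (v i) f ≠ 0 ∧ ∀ j, j ≠ i → aeval (v j) f = 0 := by
  classical
  obtain ⟨j1, j2, hj12, hj1i, hj2i, hnotin⟩ := exists_good_pair N k v hprop h3 i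
  obtain ⟨c0, hc0i, hc0W⟩ := exists_coeffs _ _ hnotin
  have hsingle : ∀ j : Fin k, j ≠ i → ∃ c : Fin N → ℂ,
      (∑ l, c l * v i l) ≠ 0 ∧ (∑ l, c l * v j l) = 0 := by
    intro j hj
    have hni : v i ∉ Submodule.span ℂ ({v j} : Set (Fin N → ℂ)) := by
      rw [Submodule.mem_span_singleton]
      rintro ⟨a, ha⟩
      exact hprop i j (fun h => hj h.symm) a ha.symm
    obtain ⟨c, hc1, hc2⟩ := exists_coeffs _ _ hni
    exact ⟨c, hc1, hc2 _ (Submodule.mem_span_singleton_self _)⟩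
  choose! c hc1 hc2 using hsingle
  set S : Finset (Fin k) := Finset.univ \ {i, j1, j2} with hS
  refine ⟨linPoly c0 * ∏ j ∈ S, linPoly (c j), ?_, ?_, ?_⟩
  · have hcard : S.card = k - 3 := by
      rw [hS, Finset.card_sdiff_of_subset (Finset.subset_univ _)]
      have : ({i, j1, j2} : Finset (Fin k)).card = 3 := by
        rw [Finset.card_insert_of_notMem (by simp [Ne.symm hj1i, Ne.symm hj2i]),
          Finset.card_insert_of_notMem (by simp [hj12]), Finset.card_singleton]
      rw [Finset.card_univ, Fintype.card_fin, this]
    have hh := (linPoly_isHomogeneous c0).mul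
      (IsHomogeneous.prod S (fun j => linPoly (c j)) (fun _ => 1)
        (fun j _ => linPoly_isHomogeneous (c j)))
    have he : 1 + ∑ _j ∈ S, 1 = k - 2 := by
      rw [Finset.sum_const, smul_eq_mul, mul_one, hcard]; omega
    rwa [he] at hh
  · rw [map_mul, aeval_linPoly]
    refine mul_ne_zero hc0i ?_
    rw [map_prod, Finset.prod_ne_zero_iff]
    intro j hjS
    rw [aeval_linPoly]
    have hji : j ≠ i := by
      rw [hS, Finset.mem_sdiff] at hjS
      simp only [Finset.mem_insert, Finset.mem_singleton, not_or] at hjS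
      exact hjS.2.1
    exact hc1 j hji
  · intro j hj
    rw [map_mul, map_prod]
    by_cases hjS : j ∈ S
    · refine mul_eq_zero_of_right _ (Finset.prod_eq_zero hjS ?_)
      rw [aeval_linPoly]
      exact hc2 j hj
    · refine mul_eq_zero_of_left ?_ _
      rw [aeval_linPoly]
      have hcase : j = j1 ∨ j = j2 := by
        rw [hS, Finset.mem_sdiff] at hjS
        simp only [Finset.mem_univ, true_and, Finset.mem_insert, Finset.mem_singleton,
          not_or, not_and, not_not] at hjS
        tauto
      refine hc0W _ (Submodule.subset_span ?_)
      rcases hcase with h | h <;> subst h <;> simp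

lemma aeval_eq_eval' {n : ℕ} (x : Fin n → ℂ) (p : MvPolynomial (Fin n) ℂ) :
    aeval x p = eval x p := by
  rw [← coe_aeval_eq_eval]; rfl

lemma surj_of_rank_ge_three (m k : ℕ) (v : Fin k → (Fin (m + 1) → ℂ))
    (hprop : ∀ i j, i ≠ j → ∀ t : ℂ, v i ≠ t • v j)
    (hk3 : 3 ≤ k)
    (h3 : 3 ≤ finrank ℂ ↥(Submodule.span ℂ (Set.range v))) :
    Function.Surjective (evalAtPointsMap m k (k - 2) v) := by
  classical
  have hsingle : ∀ i : Fin k, Pi.single i 1 ∈ LinearMap.range (evalAtPointsMap m k (k - 2) v) := by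
    intro i
    obtain ⟨f, hf, hfi, hfj⟩ := exists_sep_poly (m + 1) k hk3 v hprop h3 i
    set e := aeval (v i) f with he
    refine ⟨⟨e⁻¹ • f, Submodule.smul_mem _ _ ((mem_homogeneousSubmodule _ _).mpr hf)⟩, ?_⟩
    funext j
    show aeval (v j) (e⁻¹ • f) = (Pi.single i 1 : Fin k → ℂ) j
    rw [map_smul, smul_eq_mul]
    by_cases hji : j = i
    · subst hji
      rw [Pi.single_eq_same, ← he, inv_mul_cancel₀ hfi]
    · rw [Pi.single_eq_of_ne hji, hfj j hji, mul_zero]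
  rw [← LinearMap.range_eq_top, eq_top_iff]
  intro x _
  rw [← Finset.univ_sum_single x]
  refine Submodule.sum_mem _ fun i _ => ?_
  have h1 : Pi.single i (x i) = (x i) • (Pi.single i 1 : Fin k → ℂ) := by
    funext l
    by_cases hl : l = i <;> simp [Pi.single_apply, hl]
  rw [h1]
  exact Submodule.smul_mem _ _ (hsingle i)

lemma not_surj_of_rank_le_two (m k : ℕ) (hk : 2 ≤ k) (v : Fin k → (Fin (m + 1) → ℂ))
    (hv : ∀ i, v i ≠ 0)
    (hprop : ∀ i j, i ≠ j → ∀ t : ℂ, v i ≠ t • v j)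
    (hd : finrank ℂ ↥(Submodule.span ℂ (Set.range v)) ≤ 2) :
    ¬ Function.Surjective (evalAtPointsMap m k (k - 2) v) := by
  intro hsurj
  classical
  set i0 : Fin k := ⟨0, by omega⟩ with hi0
  set i1 : Fin k := ⟨1, by omega⟩ with hi1
  have hne : i1 ≠ i0 := by simp [hi0, hi1, Fin.ext_iff]
  have li : LinearIndependent ℂ ![v i0, v i1] := by
    rw [LinearIndependent.pair_iff' (hv i0)]
    intro t ht
    exact hprop i1 i0 hne t ht.symm
  have hW2 : Submodule.span ℂ (Set.range ![v i0, v i1]) = Submodule.span ℂ (Set.range v) := by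
    apply Submodule.eq_of_le_of_finrank_le
    · rw [Submodule.span_le]
      rintro _ ⟨j, rfl⟩
      fin_cases j <;> exact Submodule.subset_span ⟨_, rfl⟩
    · rw [finrank_span_eq_card li, Fintype.card_fin]
      exact hd
  have hex : ∀ i, ∃ cc : Fin 2 → ℂ, cc 0 • v i0 + cc 1 • v i1 = v i := by
    intro i
    have : v i ∈ Submodule.span ℂ (Set.range ![v i0, v i1]) := by
      rw [hW2]; exact Submodule.subset_span ⟨i, rfl⟩
    obtain ⟨cc, hcc⟩ := (Submodule.mem_span_range_iff_exists_fun ℂ).mp this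
    refine ⟨cc, ?_⟩
    rw [← hcc, Fin.sum_univ_two]
    simp
  choose ab hab using hex
  set a : Fin k → ℂ := fun i => ab i 0 with ha
  set b : Fin k → ℂ := fun i => ab i 1 with hb
  set φ : MvPolynomial (Fin (m + 1)) ℂ →ₐ[ℂ] MvPolynomial (Fin 2) ℂ :=
    aeval (fun j => C (v i0 j) * X 0 + C (v i1 j) * X 1) with hφ
  have heval : ∀ (f : MvPolynomial (Fin (m + 1)) ℂ) (i),
      aeval (v i) f = aeval ![a i, b i] (φ f) := by
    intro f i
    have hcomp : (aeval (v i) : MvPolynomial (Fin (m + 1)) ℂ →ₐ[ℂ] ℂ)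
        = (aeval ![a i, b i]).comp φ := by
      apply algHom_ext
      intro j
      simp only [aeval_X, AlgHom.comp_apply, hφ, map_add, map_mul, aeval_C, aeval_X]
      rw [← hab i]
      simp [ha, hb]
      ring
    rw [hcomp]; rfl
  set d := k - 2 with hdd
  set w : (Fin 2 →₀ ℕ) → (Fin k → ℂ) := fun s i => a i ^ (s 0) * b i ^ (s 1) with hw
  set wfin : Fin (k - 1) → (Fin k → ℂ) :=
    fun t i => a i ^ (t : ℕ) * b i ^ (d - (t : ℕ)) with hwfin
  have hrange : LinearMap.range (evalAtPointsMap m k d v) ≤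
      Submodule.span ℂ (Set.range wfin) := by
    rintro _ ⟨⟨f, hf⟩, rfl⟩
    have hfh : f.IsHomogeneous d := hf
    have hφf : (φ f).IsHomogeneous d := by
      have h := hfh.aeval
        (fun j => (C (v i0 j) * X 0 + C (v i1 j) * X 1 : MvPolynomial (Fin 2) ℂ))
        (fun j => (isHomogeneous_C_mul_X _ _).add (isHomogeneous_C_mul_X _ _))
      rw [one_mul] at h
      rw [hφ]
      exact h
    have hvec : evalAtPointsMap m k d v ⟨f, hf⟩
        = ∑ s ∈ (φ f).support, coeff s (φ f) • w s := by
      funext i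
      have h0 : evalAtPointsMap m k d v ⟨f, hf⟩ i = aeval (v i) f := rfl
      rw [h0, heval, aeval_eq_eval', eval_eq']
      simp only [Finset.sum_apply, Pi.smul_apply, smul_eq_mul, hw]
      refine Finset.sum_congr rfl fun s hs => ?_
      rw [Fin.prod_univ_two]
      simp
    rw [hvec]
    refine Submodule.sum_mem _ fun s hs => Submodule.smul_mem _ _ ?_
    have hs0 : s 0 + s 1 = d := by
      have hws := hφf (Finsupp.mem_support_iff.mp hs)
      rw [← hws, Finsupp.weight_apply, Finsupp.sum_fintype, Fin.sum_univ_two]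
      · simp
      · intro i; simp
    have hlt : s 0 < k - 1 := by omega
    refine Submodule.subset_span ⟨⟨s 0, hlt⟩, ?_⟩
    funext i
    simp only [hwfin, hw, Fin.val_mk]
    congr 2
    omega
  have hspan : Submodule.span ℂ (Set.range wfin) = (⊤ : Submodule ℂ (Fin k → ℂ)) := by
    apply le_antisymm le_top
    rw [← LinearMap.range_eq_top.mpr hsurj]
    exact hrange
  have h1 : finrank ℂ (Fin k → ℂ) ≤ k - 1 := by
    have h2 := finrank_range_le_card (R := ℂ) wfin
    rw [Set.finrank] at h2
    rw [hspan, Fintype.card_fin] at h2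
    rwa [finrank_top] at h2
  rw [Module.finrank_fin_fun] at h1
  omega

end EvalPointsAux

/-- A reduced finite scheme of `k` distinct points in `ℙᵐ` fails to be
`(k-2)`-normal if and only if the points lie on a line, i.e. the corresponding
vectors span a subspace of `ℂ^{m+1}` of dimension at most `2`. -/
theorem eval_map_degree_sub_two_not_surjective_iff
    (m k : ℕ) (hm : 1 ≤ m) (hk : 2 ≤ k) (v : Fin k → (Fin (m + 1) → ℂ))
    (hv : ∀ i, v i ≠ 0)
    (hprop : ∀ i j, i ≠ j → ∀ t : ℂ, v i ≠ t • v j) :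
    ¬ Function.Surjective (evalAtPointsMap m k (k - 2) v) ↔
      Module.finrank ℂ ↥(Submodule.span ℂ (Set.range v)) ≤ 2 := by
  constructor
  · intro hnsurj
    by_contra h2
    push_neg at h2
    have h3 : 3 ≤ Module.finrank ℂ ↥(Submodule.span ℂ (Set.range v)) := h2
    have hk3 : 3 ≤ k := by
      have := finrank_range_le_card (R := ℂ) v
      rw [Set.finrank] at this
      simp only [Fintype.card_fin] at this
      omega
    exact hnsurj (EvalPointsAux.surj_of_rank_ge_three m k v hprop hk3 h3)
  · intro hd
    exact EvalPointsAux.not_surj_of_rank_le_two m k hk v hv hprop hd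
end
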